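/- Maximizing the minimum pairwise subgraph distance over selections of k matches, one per partition from k pairwise non-adjacent partitions all at mutual PAG hop distance at least h, guarantees distance diversity at least 2(h−1)d, while no selection of k matches can achieve diversity greater than 2(H+1)d where H is the maximum PAG hop distance between any two partitions; hence choosing matches from the mutually farthest partitions achieves ratio at least (h−1)/(H+1) of the optimum. -/

import Mathlib

/-- Subgraph distance: minimum shortest-path distance over pairs of vertices. -/
noncomputable def subDist {V : Type*} [MetricSpace V] (A B : Finset V) : ℝ :=
  sInf {x : ℝ | ∃ a ∈ A, ∃ b ∈ B, dist a b = x}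

/-- Under the distance envelope (all cross-partition vertex distances for partitions at PAG
hop distance `h'` lie in `[2(h'−1)d, 2(h'+1)d]`, radius `d > 0`), selecting one match per
partition from `k` partitions at mutual hop distance at least `h` guarantees pairwise
subgraph distance at least `2(h−1)d`; no selection of matches from distinct partitions can
have any pairwise subgraph distance exceeding `2(H+1)d`, where `H` bounds all hop distances;
hence the chosen selection achieves at least a `(h−1)/(H+1)` fraction of the optimum. -/
theorem farthest_partition_selection_ratio {V ι : Type*} [MetricSpace V]
    (P : ι → Set V) (hop : ι → ι → ℕ) (d : ℝ) (hd : 0 < d)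
    (henvLo : ∀ i j : ι, ∀ u ∈ P i, ∀ v ∈ P j,
      2 * ((hop i j : ℝ) - 1) * d ≤ dist u v)
    (henvHi : ∀ i j : ι, ∀ u ∈ P i, ∀ v ∈ P j,
      dist u v ≤ 2 * ((hop i j : ℝ) + 1) * d)
    (k : ℕ) (hk : 2 ≤ k) (h H : ℕ) (hH : ∀ i j : ι, hop i j ≤ H)
    (s : Fin k → ι) (hs : Function.Injective s)
    (hsep : ∀ a b : Fin k, a ≠ b → h ≤ hop (s a) (s b))
    (M : Fin k → Finset V) (hM : ∀ a, (M a : Set V) ⊆ P (s a))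
    (hMne : ∀ a, (M a).Nonempty) :
    (∀ a b : Fin k, a ≠ b → 2 * ((h : ℝ) - 1) * d ≤ subDist (M a) (M b)) ∧
    (∀ (t : Fin k → ι), Function.Injective t →
      ∀ (N : Fin k → Finset V), (∀ a, (N a : Set V) ⊆ P (t a)) → (∀ a, (N a).Nonempty) →
      ∀ a b : Fin k, a ≠ b → subDist (N a) (N b) ≤ 2 * ((H : ℝ) + 1) * d) ∧
    (∀ a b : Fin k, a ≠ b →
      ((h : ℝ) - 1) / ((H : ℝ) + 1) * (2 * ((H : ℝ) + 1) * d) ≤ subDist (M a) (M b)) := by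

  have key : ∀ a b : Fin k, a ≠ b → 2 * ((h : ℝ) - 1) * d ≤ subDist (M a) (M b) := by
    intro a b hab
    apply le_csInf
    · obtain ⟨u, hu⟩ := hMne a
      obtain ⟨v, hv⟩ := hMne b
      exact ⟨dist u v, u, hu, v, hv, rfl⟩
    · rintro x ⟨u, hu, v, hv, rfl⟩
      have h1 := henvLo (s a) (s b) u (hM a hu) v (hM b hv)
      refine le_trans ?_ h1
      have hh : (h : ℝ) ≤ (hop (s a) (s b) : ℝ) := Nat.cast_le.mpr (hsep a b hab)
      nlinarith
  refine ⟨key, ?_, ?_⟩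
  · intro t ht N hN hNne a b hab
    obtain ⟨u, hu⟩ := hNne a
    obtain ⟨v, hv⟩ := hNne b
    have h1 := henvHi (t a) (t b) u (hN a hu) v (hN b hv)
    have h2 : dist u v ≤ 2 * ((H : ℝ) + 1) * d := by
      refine le_trans h1 ?_
      have : (hop (t a) (t b) : ℝ) ≤ (H : ℝ) := Nat.cast_le.mpr (hH _ _)
      nlinarith
    refine le_trans (csInf_le ?_ ⟨u, hu, v, hv, rfl⟩) h2
    refine ⟨0, ?_⟩
    rintro x ⟨u', _, v', _, rfl⟩
    exact dist_nonneg
  · intro a b hab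
    have := key a b hab
    have hHpos : (0:ℝ) < (H : ℝ) + 1 := by positivity
    calc ((h : ℝ) - 1) / ((H : ℝ) + 1) * (2 * ((H : ℝ) + 1) * d)
        = 2 * ((h : ℝ) - 1) * d := by field_simp
      _ ≤ subDist (M a) (M b) := this
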